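/- Let E := EuclideanSpace ℝ (Fin 3) and let φ : E → ℝ be cone-smooth, i.e. φ(y) = f(y) + ‖y‖·g(y) for all y with f, g : E → ℝ of class C^∞. Then Real.exp ∘ φ is cone-smooth: there exist C^∞ functions f₁, g₁ : E → ℝ with exp(φ(y)) = f₁(y) + ‖y‖·g₁(y) for all y ∈ E. -/

import Mathlib

open FormalMultilinearSeries Filter
section
open Nat

/-- Coefficients of the `cosh √·` series. -/
noncomputable def coshCoeff (n : ℕ) : ℝ := 1 / (2 * n)!

/-- Coefficients of the `sinh √· / √·` series. -/
noncomputable def sinhCoeff (n : ℕ) : ℝ := 1 / (2 * n + 1)!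

lemma factorial_ratio_tendsto (a : ℕ → ℕ) (h : ∀ n, a n + 2 ≤ a (n + 1) + 1)
    (ha : Tendsto a atTop atTop) :
    Tendsto (fun n : ℕ ↦ ‖(1 : ℝ) / (a (n + 1))!‖ / ‖(1 : ℝ) / (a n)!‖) atTop (nhds 0) := by
  have key : ∀ n : ℕ, ‖(1 : ℝ) / (a (n + 1))!‖ / ‖(1 : ℝ) / (a n)!‖ ≤ 1 / (a n + 1) := by
    intro n
    have h1 : (0:ℝ) < (a n)! := by exact_mod_cast Nat.factorial_pos _
    have h2 : (0:ℝ) < (a (n+1))! := by exact_mod_cast Nat.factorial_pos _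
    have hle : (a n + 1) * (a n)! ≤ (a (n + 1))! := by
      calc (a n + 1) * (a n)! = (a n + 1)! := (Nat.factorial_succ _).symm
        _ ≤ (a (n+1))! := Nat.factorial_le (by have := h n; omega)
    have heq : ‖(1 : ℝ) / (a (n + 1))!‖ / ‖(1 : ℝ) / (a n)!‖
        = ((a n)! : ℝ) / (a (n+1))! := by
      rw [norm_div, norm_div, norm_one, Real.norm_of_nonneg (by positivity),
        Real.norm_of_nonneg (by positivity)]
      field_simp
    rw [heq, div_le_div_iff₀ h2 (by positivity)]
    calc ((a n)! : ℝ) * (a n + 1) = ((a n + 1) * (a n)! : ℕ) := by push_cast; ring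
      _ ≤ ((a (n+1))! : ℝ) := by exact_mod_cast hle
      _ = 1 * (a (n+1))! := (one_mul _).symm
  have hpos : ∀ n : ℕ, 0 ≤ ‖(1 : ℝ) / (a (n + 1))!‖ / ‖(1 : ℝ) / (a n)!‖ := fun n ↦ by positivity
  refine squeeze_zero hpos key ?_
  have : Tendsto (fun n : ℕ ↦ (a n : ℝ) + 1) atTop atTop :=
    tendsto_atTop_add_const_right _ 1 (tendsto_natCast_atTop_atTop.comp ha)
  simpa [Pi.inv_def] using this.inv_tendsto_atTop

lemma contDiff_ofScalarsSum (c : ℕ → ℝ) (hc : ∀ n, c n ≠ 0)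
    (hr : Tendsto (fun n ↦ ‖c (n + 1)‖ / ‖c n‖) atTop (nhds 0)) :
    ContDiff ℝ (⊤ : ℕ∞) (ofScalarsSum c : ℝ → ℝ) := by
  have hrad : (ofScalars ℝ c).radius = ⊤ :=
    ofScalars_radius_eq_top_of_tendsto ℝ c (Eventually.of_forall hc) hr
  have hball : HasFPowerSeriesOnBall (ofScalarsSum c) (ofScalars ℝ c) 0 (ofScalars ℝ c).radius :=
    (ofScalars ℝ c).hasFPowerSeriesOnBall (by rw [hrad]; exact ENNReal.zero_lt_top)
  rw [contDiff_iff_contDiffAt]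
  intro x
  have hx : AnalyticAt ℝ (ofScalarsSum c) x := by
    refine hball.analyticAt_of_mem ?_
    simp [EMetric.mem_ball, hrad]
  exact hx.contDiffAt

lemma cosh_sinh_even_odd :
    ∃ C S : ℝ → ℝ, ContDiff ℝ (⊤ : ℕ∞) C ∧ ContDiff ℝ (⊤ : ℕ∞) S ∧
      (∀ x : ℝ, Real.cosh x = C (x ^ 2)) ∧ (∀ x : ℝ, Real.sinh x = x * S (x ^ 2)) := by
  refine ⟨ofScalarsSum coshCoeff, ofScalarsSum sinhCoeff, ?_, ?_, ?_, ?_⟩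
  · refine contDiff_ofScalarsSum _ (fun n ↦ by unfold coshCoeff; positivity) ?_
    exact factorial_ratio_tendsto (fun n ↦ 2 * n) (fun n ↦ by show 2*n+2 ≤ 2*(n+1)+1; omega)
      (tendsto_atTop_atTop_of_monotone (fun a b h ↦ by omega) (fun b ↦ ⟨b, by omega⟩))
  · refine contDiff_ofScalarsSum _ (fun n ↦ by unfold sinhCoeff; positivity) ?_
    exact factorial_ratio_tendsto (fun n ↦ 2 * n + 1) (fun n ↦ by show 2*n+1+2 ≤ 2*(n+1)+1+1; omega)
      (tendsto_atTop_atTop_of_monotone (fun a b h ↦ by omega) (fun b ↦ ⟨b, by omega⟩))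
  · intro x
    rw [ofScalars_sum_eq, Real.cosh_eq_tsum]
    refine tsum_congr fun n ↦ ?_
    simp only [coshCoeff, smul_eq_mul, ← pow_mul]
    ring
  · intro x
    rw [ofScalars_sum_eq, ← tsum_mul_left, Real.sinh_eq_tsum]
    refine tsum_congr fun n ↦ ?_
    simp only [sinhCoeff, smul_eq_mul, ← pow_mul]
    rw [pow_add, pow_one]
    ring

end

/-- Lemma A.2 (i), k = ∞: the exponential of a cone-smooth function is cone-smooth. -/
theorem cone_smooth_exp (φ : EuclideanSpace ℝ (Fin 3) → ℝ)
    (f g : EuclideanSpace ℝ (Fin 3) → ℝ)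
    (hf : ContDiff ℝ (⊤ : ℕ∞) f) (hg : ContDiff ℝ (⊤ : ℕ∞) g)
    (hφ : ∀ y : EuclideanSpace ℝ (Fin 3), φ y = f y + ‖y‖ * g y) :
    ∃ f₁ g₁ : EuclideanSpace ℝ (Fin 3) → ℝ,
      ContDiff ℝ (⊤ : ℕ∞) f₁ ∧ ContDiff ℝ (⊤ : ℕ∞) g₁ ∧
      ∀ y : EuclideanSpace ℝ (Fin 3), Real.exp (φ y) = f₁ y + ‖y‖ * g₁ y := by
  obtain ⟨C, S, hC, hS, hcosh, hsinh⟩ := cosh_sinh_even_odd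
  have hq : ContDiff ℝ (⊤ : ℕ∞) (fun y : EuclideanSpace ℝ (Fin 3) ↦ ‖y‖ ^ 2 * g y ^ 2) :=
    (contDiff_norm_sq ℝ).mul (hg.pow 2)
  refine ⟨fun y ↦ Real.exp (f y) * C (‖y‖ ^ 2 * g y ^ 2),
    fun y ↦ Real.exp (f y) * (g y * S (‖y‖ ^ 2 * g y ^ 2)), ?_, ?_, ?_⟩
  · exact (Real.contDiff_exp.comp hf).mul (hC.comp hq)
  · exact (Real.contDiff_exp.comp hf).mul (hg.mul (hS.comp hq))
  · intro y
    have key : (‖y‖ * g y) ^ 2 = ‖y‖ ^ 2 * g y ^ 2 := mul_pow _ _ 2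
    rw [hφ y, Real.exp_add, ← Real.cosh_add_sinh (‖y‖ * g y),
      hcosh (‖y‖ * g y), hsinh (‖y‖ * g y), key]
    ring
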